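/- arXiv:1212.1785 — 2 statements merged into one kernel-verified Lean document; each statement's English description precedes it below -/
import Mathlib

section
/- If Q := mut_w(P, F; {G_h}) is a combinatorial mutation of P, then every vertex of Q has the form v_P + ⟨w, v_P⟩·v_F for some lattice point v_P ∈ w_h(P) ∩ N (where h = ⟨w, v_P⟩) and some vertex v_F of F. -/
open Set Pointwise

noncomputable section

def pairing {n : ℕ} (w : Fin n → ℤ) (x : Fin n → ℚ) : ℚ :=
  ∑ i, (w i : ℚ) * x i

def IsLatticePt {n : ℕ} (x : Fin n → ℚ) : Prop := ∀ i, ∃ z : ℤ, x i = (z : ℚ)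

def IsLatticePolytope {n : ℕ} (P : Set (Fin n → ℚ)) : Prop :=
  ∃ S : Finset (Fin n → ℚ), (∀ x ∈ S, IsLatticePt x) ∧ P = convexHull ℚ (S : Set (Fin n → ℚ))

def IsPrimitive {n : ℕ} (w : Fin n → ℤ) : Prop := Finset.univ.gcd w = 1

def wSlice {n : ℕ} (w : Fin n → ℤ) (h : ℤ) (P : Set (Fin n → ℚ)) : Set (Fin n → ℚ) :=
  convexHull ℚ {x | x ∈ P ∧ IsLatticePt x ∧ pairing w x = (h : ℚ)}

def mutation {n : ℕ} (w : Fin n → ℤ) (P F : Set (Fin n → ℚ)) (G : ℤ → Set (Fin n → ℚ)) :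
    Set (Fin n → ℚ) :=
  convexHull ℚ ((⋃ h : ℤ, ⋃ _ : h < 0, G h) ∪
    ⋃ h : ℤ, ⋃ _ : 0 ≤ h, (wSlice w h P + (h : ℚ) • F))

def IsMutData {n : ℕ} (w : Fin n → ℤ) (P F : Set (Fin n → ℚ))
    (G : ℤ → Set (Fin n → ℚ)) : Prop :=
  IsLatticePolytope F ∧ F.Nonempty ∧ (∀ x ∈ F, pairing w x = 0) ∧
  ∀ h : ℤ, h < 0 →
    (G h = ∅ ∨ IsLatticePolytope (G h)) ∧
    {v | v ∈ P.extremePoints ℚ ∧ pairing w v = (h : ℚ)} ⊆ G h + (-(h : ℚ)) • F ∧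
    G h + (-(h : ℚ)) • F ⊆ wSlice w h P

def dpair {n : ℕ} (u v : Fin n → ℚ) : ℚ := ∑ i, u i * v i

def dualP {n : ℕ} (P : Set (Fin n → ℚ)) : Set (Fin n → ℚ) := {u | ∀ v ∈ P, -1 ≤ dpair u v}

/-! ### Auxiliary lemmas -/

lemma pairing_comb {n : ℕ} (w : Fin n → ℤ) (a b : ℚ) (x y : Fin n → ℚ) :
    pairing w (a • x + b • y) = a * pairing w x + b * pairing w y := by
  simp only [pairing, Finset.mul_sum, ← Finset.sum_add_distrib]
  refine Finset.sum_congr rfl fun i _ => ?_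
  simp [Pi.add_apply, Pi.smul_apply, smul_eq_mul]
  ring

lemma pairing_of_mem_wSlice {n : ℕ} (w : Fin n → ℤ) (h : ℤ) (P : Set (Fin n → ℚ))
    {x : Fin n → ℚ} (hx : x ∈ wSlice w h P) : pairing w x = (h : ℚ) := by
  have hconv : Convex ℚ {y : Fin n → ℚ | pairing w y = (h : ℚ)} := by
    intro u hu v hv a b ha hb hab
    simp only [mem_setOf_eq] at hu hv ⊢
    rw [pairing_comb, hu, hv, ← add_mul, hab, one_mul]
  have : wSlice w h P ⊆ {y : Fin n → ℚ | pairing w y = (h : ℚ)} :=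
    convexHull_min (fun y hy => hy.2.2) hconv
  exact this hx

/-- Extreme points restrict to subsets. -/
lemma extremePoints_mono {E : Type*} [AddCommGroup E] [Module ℚ E] {A B : Set E}
    (hAB : A ⊆ B) {v : E} (hv : v ∈ B.extremePoints ℚ) (hvA : v ∈ A) :
    v ∈ A.extremePoints ℚ :=
  ⟨hvA, fun x₁ h₁ x₂ h₂ hseg => hv.2 (hAB h₁) (hAB h₂) hseg⟩

/-- An extreme point of a Minkowski sum decomposes into extreme points. -/
lemma extreme_of_add {E : Type*} [AddCommGroup E] [Module ℚ E] {C D : Set E}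
    {c d : E} (hc : c ∈ C) (hd : d ∈ D) (hv : c + d ∈ (C + D).extremePoints ℚ) :
    c ∈ C.extremePoints ℚ ∧ d ∈ D.extremePoints ℚ := by
  constructor
  · refine ⟨hc, fun x₁ h₁ x₂ h₂ hseg => ?_⟩
    obtain ⟨a, b, ha, hb, hab, habc⟩ := hseg
    have hmem : a • (x₁ + d) + b • (x₂ + d) = c + d := by
      calc a • (x₁ + d) + b • (x₂ + d) = (a • x₁ + b • x₂) + (a + b) • d := by module
        _ = c + d := by rw [habc, hab, one_smul]
    have := hv.2 (add_mem_add h₁ hd) (add_mem_add h₂ hd)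
      ⟨a, b, ha, hb, hab, hmem⟩
    exact add_right_cancel this
  · refine ⟨hd, fun x₁ h₁ x₂ h₂ hseg => ?_⟩
    obtain ⟨a, b, ha, hb, hab, habd⟩ := hseg
    have hmem : a • (c + x₁) + b • (c + x₂) = c + d := by
      calc a • (c + x₁) + b • (c + x₂) = (a + b) • c + (a • x₁ + b • x₂) := by module
        _ = c + d := by rw [habd, hab, one_smul]
    have := hv.2 (add_mem_add hc h₁) (add_mem_add hc h₂)
      ⟨a, b, ha, hb, hab, hmem⟩
    exact add_left_cancel this

/-- An extreme point of a positive scalar multiple of a set comes from an extreme point. -/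
lemma extreme_of_smul {E : Type*} [AddCommGroup E] [Module ℚ E] {F : Set E} {q : ℚ}
    (hq : q ≠ 0) {f : E} (hf : f ∈ F) (hv : q • f ∈ (q • F).extremePoints ℚ) :
    f ∈ F.extremePoints ℚ := by
  refine ⟨hf, fun x₁ h₁ x₂ h₂ hseg => ?_⟩
  obtain ⟨a, b, ha, hb, hab, habf⟩ := hseg
  have hmem : a • (q • x₁) + b • (q • x₂) = q • f := by
    rw [← habf]; module
  have := hv.2 (smul_mem_smul_set h₁) (smul_mem_smul_set h₂) ⟨a, b, ha, hb, hab, hmem⟩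
  exact smul_right_injective E hq this

/-- The convex hull of a nonempty finite set has an extreme point. -/
lemma exists_extreme_of_finset {E : Type*} [AddCommGroup E] [Module ℚ E]
    (S : Finset E) (hS : S.Nonempty) :
    ∃ s ∈ S, s ∈ (convexHull ℚ (S : Set E)).extremePoints ℚ := by
  classical
  induction S using Finset.strongInduction with
  | _ S ih =>
  by_cases H : ∃ s ∈ S, s ∈ convexHull ℚ ((S.erase s : Finset E) : Set E)
  · obtain ⟨s, hsS, hs⟩ := H
    have hne : (S.erase s).Nonempty := by
      rcases (S.erase s).eq_empty_or_nonempty with h | h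
      · rw [h] at hs; simp at hs
      · exact h
    have hsub : (S : Set E) ⊆ convexHull ℚ ((S.erase s : Finset E) : Set E) := by
      intro x hx
      by_cases hxs : x = s
      · rw [hxs]; exact hs
      · exact subset_convexHull ℚ _ (by
          simp only [Finset.coe_erase, mem_diff, mem_singleton_iff]
          exact ⟨hx, hxs⟩)
    have heq : convexHull ℚ (S : Set E) = convexHull ℚ ((S.erase s : Finset E) : Set E) := by
      refine le_antisymm ?_ (convexHull_mono (by simp [Finset.coe_erase, diff_subset]))
      exact convexHull_min hsub (convex_convexHull ℚ _)
    obtain ⟨t, htS, ht⟩ := ih (S.erase s) (Finset.erase_ssubset hsS) hne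
    exact ⟨t, Finset.mem_of_mem_erase htS, heq ▸ ht⟩
  · push_neg at H
    obtain ⟨s, hsS⟩ := hS
    have hs := H s hsS
    refine ⟨s, hsS, subset_convexHull ℚ _ hsS, fun x hx y hy hseg => ?_⟩
    rcases (S.erase s).eq_empty_or_nonempty with hemp | hne
    · have : S = {s} := by
        ext a; constructor
        · intro haS
          by_contra hne'
          have : a ∈ S.erase s := Finset.mem_erase.2 ⟨by simpa using hne', haS⟩
          rw [hemp] at this; simp at this
        · intro h; simp at h; rw [h]; exact hsS
      rw [this] at hx hy
      simp only [Finset.coe_singleton, convexHull_singleton, mem_singleton_iff] at hx hy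
      exact hx
    · have hins : (S : Set E) = insert s ((S.erase s : Finset E) : Set E) := by
        rw [← Finset.coe_insert, Finset.insert_erase hsS]
      have hrep : ∀ z ∈ convexHull ℚ (S : Set E),
          ∃ u v : ℚ, ∃ m ∈ convexHull ℚ ((S.erase s : Finset E) : Set E),
            0 ≤ u ∧ 0 ≤ v ∧ u + v = 1 ∧ u • s + v • m = z := by
        intro z hz
        rw [hins, convexHull_insert hne.to_set] at hz
        rw [mem_convexJoin] at hz
        obtain ⟨a, ha, m, hm, hzseg⟩ := hz
        rw [mem_singleton_iff] at ha
        subst ha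
        obtain ⟨u, v, hu, hv, huv, hz⟩ := hzseg
        exact ⟨u, v, m, hm, hu, hv, huv, hz⟩
      obtain ⟨u, v, zx, hzx, hu, hv, huv, hxeq⟩ := hrep x hx
      obtain ⟨u', v', zy, hzy, hu', hv', huv', hyeq⟩ := hrep y hy
      obtain ⟨t, r, ht, hr, htr, hseq⟩ := hseg
      -- s = (t*u + r*u') • s + (t*v) • zx + (r*v') • zy
      set c : ℚ := t * v + r * v' with hc
      have hkey : t • x + r • y = (t * u + r * u') • s + (t * v) • zx + (r * v') • zy := by
        rw [← hxeq, ← hyeq]; module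
      rw [hseq] at hkey
      have hsum : (t * u + r * u') + c = 1 := by
        have : t * (u + v) + r * (u' + v') = t + r := by rw [huv, huv']; ring
        rw [hc]; linarith [this, htr]
      rcases eq_or_lt_of_le (show (0:ℚ) ≤ c from by positivity) with hc0 | hcpos
      · -- c = 0 : both v, v' vanish, so x = s and y = s
        have htv : t * v = 0 ∧ r * v' = 0 := by
          constructor <;> nlinarith [mul_nonneg ht.le hv, mul_nonneg hr.le hv']
        have hv0 : v = 0 := by
          rcases mul_eq_zero.1 htv.1 with h | h
          · exact absurd h (ne_of_gt ht)
          · exact h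
        have hv'0 : v' = 0 := by
          rcases mul_eq_zero.1 htv.2 with h | h
          · exact absurd h (ne_of_gt hr)
          · exact h
        have hu1 : u = 1 := by linarith
        have hu'1 : u' = 1 := by linarith
        rw [← hxeq, hv0, hu1]; simp
      · -- c > 0 : s would lie in the hull of S.erase s, contradiction
        exfalso
        have hcne : c ≠ 0 := ne_of_gt hcpos
        set m : E := (t * v / c) • zx + (r * v' / c) • zy with hm
        have hmmem : m ∈ convexHull ℚ ((S.erase s : Finset E) : Set E) := by
          refine (convex_convexHull ℚ _) hzx hzy ?_ ?_ ?_
          · positivity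
          · positivity
          · field_simp; exact hc.symm
        have hsm : c • s = c • m := by
          have h1 : s = (1 - c) • s + c • m := by
            rw [hm, smul_add, smul_smul, smul_smul, mul_div_cancel₀ _ hcne,
              mul_div_cancel₀ _ hcne]
            have h1c : (1 : ℚ) - c = t * u + r * u' := by linarith
            rw [h1c, ← add_assoc]
            exact hkey
          calc c • s = ((1 - c) • s + c • m) - (1 - c) • s := by rw [← h1]; module
            _ = c • m := by module
        have : s = m := smul_right_injective E hcne hsm
        exact hs (this ▸ hmmem)


lemma lattice_add_int_smul {n : ℕ} {x y : Fin n → ℚ} (k : ℤ)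
    (hx : IsLatticePt x) (hy : IsLatticePt y) : IsLatticePt (x + (k : ℚ) • y) := by
  intro i
  obtain ⟨a, ha⟩ := hx i
  obtain ⟨b, hb⟩ := hy i
  refine ⟨a + k * b, ?_⟩
  rw [Pi.add_apply, Pi.smul_apply, ha, hb, smul_eq_mul]
  push_cast
  ring

/-- Every vertex of a combinatorial mutation `Q = mut_w(P,F;{G_h})` has the form
`v_P + ⟨w,v_P⟩ • v_F` for some lattice point `v_P ∈ w_h(P)` (where `h = ⟨w,v_P⟩`)
and some vertex `v_F` of `F`. -/
theorem mutation_vertices {n : ℕ} (w : Fin n → ℤ) (P F : Set (Fin n → ℚ))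
    (G : ℤ → Set (Fin n → ℚ)) (hP : IsLatticePolytope P) (hw : IsPrimitive w)
    (hdata : IsMutData w P F G) :
    ∀ v ∈ (mutation w P F G).extremePoints ℚ,
      ∃ h : ℤ, ∃ vP ∈ wSlice w h P, IsLatticePt vP ∧ pairing w vP = (h : ℚ) ∧
        ∃ vF ∈ F.extremePoints ℚ, v = vP + (h : ℚ) • vF := by
  intro v hv
  obtain ⟨hFpoly, hFne, hFpair, hG⟩ := hdata
  obtain ⟨SF, hSFlat, hFeq⟩ := hFpoly
  have hSFne : SF.Nonempty := by
    rcases SF.eq_empty_or_nonempty with h | h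
    · exfalso
      rw [h] at hFeq
      simp only [Finset.coe_empty, convexHull_empty] at hFeq
      exact hFne.ne_empty hFeq
    · exact h
  obtain ⟨f0, hf0S, hf0ext⟩ := exists_extreme_of_finset SF hSFne
  have hf0F : f0 ∈ F.extremePoints ℚ := by rw [hFeq]; exact hf0ext
  have hf0mem : f0 ∈ F := hf0F.1
  have hf0lat : IsLatticePt f0 := hSFlat f0 hf0S
  have hvU := extremePoints_convexHull_subset hv
  rcases hvU with hvA | hvB
  · -- v lies in some G h with h < 0
    simp only [mem_iUnion] at hvA
    obtain ⟨h, hneg, hvG⟩ := hvA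
    obtain ⟨hGlat, _, hGsub2⟩ := hG h hneg
    have hGne : (G h).Nonempty := ⟨v, hvG⟩
    rcases hGlat with hGemp | ⟨SG, hSGlat, hGeq⟩
    · exact absurd hGemp hGne.ne_empty
    have hGsubQ : G h ⊆ mutation w P F G := by
      refine subset_trans ?_ (subset_convexHull ℚ _)
      refine subset_trans ?_ subset_union_left
      intro x hx
      exact mem_iUnion.2 ⟨h, mem_iUnion.2 ⟨hneg, hx⟩⟩
    have hvGe : v ∈ (G h).extremePoints ℚ := extremePoints_mono hGsubQ hv hvG
    have hvlat : IsLatticePt v := by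
      rw [hGeq] at hvGe
      exact hSGlat v (extremePoints_convexHull_subset hvGe)
    set vP : Fin n → ℚ := v + ((-h : ℤ) : ℚ) • f0 with hvP
    have hvPmem : vP ∈ G h + (-(h : ℚ)) • F := by
      refine add_mem_add hvG ?_
      have : ((-h : ℤ) : ℚ) = -(h : ℚ) := by push_cast; ring
      rw [← this]
      exact smul_mem_smul_set hf0mem
    have hvPslice : vP ∈ wSlice w h P := hGsub2 hvPmem
    refine ⟨h, vP, hvPslice, lattice_add_int_smul (-h) hvlat hf0lat,
      pairing_of_mem_wSlice w h P hvPslice, f0, hf0F, ?_⟩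
    rw [hvP]
    push_cast
    module
  · -- v lies in wSlice w h P + h • F with 0 ≤ h
    simp only [mem_iUnion] at hvB
    obtain ⟨h, hpos, hvB⟩ := hvB
    have hsubQ : wSlice w h P + (h : ℚ) • F ⊆ mutation w P F G := by
      refine subset_trans ?_ (subset_convexHull ℚ _)
      refine subset_trans ?_ subset_union_right
      intro x hx
      exact mem_iUnion.2 ⟨h, mem_iUnion.2 ⟨hpos, hx⟩⟩
    obtain ⟨p, hp, d, hd, hpd0⟩ := hvB
    have hpd : p + d = v := hpd0
    have hvCD : p + d ∈ (wSlice w h P + (h : ℚ) • F).extremePoints ℚ := by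
      rw [hpd]
      exact extremePoints_mono hsubQ hv (hpd ▸ Set.add_mem_add hp hd)
    obtain ⟨hpext, hdext⟩ := extreme_of_add hp hd hvCD
    have hpT := extremePoints_convexHull_subset hpext
    have hpslice : p ∈ wSlice w h P := hp
    rcases eq_or_lt_of_le hpos with h0 | hposs
    · -- h = 0
      have hd0 : d = 0 := by
        rw [← h0] at hd
        simp only [Int.cast_zero, zero_smul_set hFne, mem_zero] at hd
        exact hd
      refine ⟨0, p, by rwa [← h0] at hpslice, hpT.2.1, by rw [hpT.2.2, ← h0], f0, hf0F, ?_⟩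
      rw [← hpd, hd0]
      simp
    · -- 0 < h
      obtain ⟨f, hf, hfd⟩ := hd
      have hhne : ((h : ℚ)) ≠ 0 := by
        simp only [ne_eq, Int.cast_eq_zero]
        omega
      rw [← hfd] at hdext
      have hfext : f ∈ F.extremePoints ℚ := extreme_of_smul hhne hf hdext
      exact ⟨h, p, hpslice, hpT.2.1, hpT.2.2, f, hfext, by rw [← hpd, ← hfd]⟩

end
end

section
/- If w is a width-two vector for P (i.e., h_min = −1 and h_max = 1), then a combinatorial mutation Q := mut_w(P,F) is a canonical polytope if and only if P is a canonical polytope. -/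
open Set Pointwise

noncomputable section

def IsPrimitivePt {n : ℕ} (x : Fin n → ℚ) : Prop :=
  ∃ z : Fin n → ℤ, (∀ i, x i = (z i : ℚ)) ∧ Finset.univ.gcd z = 1

def IsFano {n : ℕ} (P : Set (Fin n → ℚ)) : Prop :=
  IsLatticePolytope P ∧ (0 : Fin n → ℚ) ∈ interior P ∧
    ∀ v ∈ P.extremePoints ℚ, IsPrimitivePt v

def IsCanonical {n : ℕ} (P : Set (Fin n → ℚ)) : Prop :=
  IsFano P ∧ ∀ x ∈ interior P, IsLatticePt x → x = 0

section MutationAux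

variable {n : ℕ}

lemma pairing_add (w : Fin n → ℤ) (x y : Fin n → ℚ) :
    pairing w (x + y) = pairing w x + pairing w y := by
  simp [pairing, mul_add, Finset.sum_add_distrib]

lemma pairing_smul (w : Fin n → ℤ) (c : ℚ) (x : Fin n → ℚ) :
    pairing w (c • x) = c * pairing w x := by
  simp [pairing, Finset.mul_sum]; ring_nf; simp [mul_comm, mul_left_comm]

lemma pairing_isLinear (w : Fin n → ℤ) : IsLinearMap ℚ (pairing w) :=
  ⟨pairing_add w, fun c x => pairing_smul w c x⟩

lemma pairing_zero (w : Fin n → ℤ) : pairing w (0 : Fin n → ℚ) = 0 := by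
  simp [pairing]

lemma pairing_neg_w (w : Fin n → ℤ) (x : Fin n → ℚ) :
    pairing (-w) x = -pairing w x := by
  simp [pairing, Finset.sum_neg_distrib]

lemma pairing_continuous (w : Fin n → ℤ) : Continuous (pairing w) := by
  unfold pairing
  exact continuous_finset_sum _ fun i _ => (continuous_const.mul (continuous_apply i))

lemma pairing_int (w : Fin n → ℤ) {x : Fin n → ℚ} (hx : IsLatticePt x) :
    ∃ m : ℤ, pairing w x = (m : ℚ) := by
  choose z hz using hx
  refine ⟨∑ i, w i * z i, ?_⟩
  unfold pairing
  push_cast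
  exact Finset.sum_congr rfl fun i _ => by rw [hz i]

lemma hull_pairing_eq (w : Fin n → ℤ) {S : Set (Fin n → ℚ)} {c : ℚ}
    (h : ∀ x ∈ S, pairing w x = c) {x : Fin n → ℚ}
    (hx : x ∈ convexHull ℚ S) : pairing w x = c := by
  have : convexHull ℚ S ⊆ {x | pairing w x = c} :=
    convexHull_min h (convex_hyperplane (pairing_isLinear w) c)
  exact this hx

lemma hull_pairing_le (w : Fin n → ℤ) {S : Set (Fin n → ℚ)} {c : ℚ}
    (h : ∀ x ∈ S, pairing w x ≤ c) {x : Fin n → ℚ}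
    (hx : x ∈ convexHull ℚ S) : pairing w x ≤ c := by
  have : convexHull ℚ S ⊆ {x | pairing w x ≤ c} :=
    convexHull_min h (convex_halfSpace_le (pairing_isLinear w) c)
  exact this hx

lemma hull_pairing_ge (w : Fin n → ℤ) {S : Set (Fin n → ℚ)} {c : ℚ}
    (h : ∀ x ∈ S, c ≤ pairing w x) {x : Fin n → ℚ}
    (hx : x ∈ convexHull ℚ S) : c ≤ pairing w x := by
  have : convexHull ℚ S ⊆ {x | c ≤ pairing w x} :=
    convexHull_min h (convex_halfSpace_ge (pairing_isLinear w) c)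
  exact this hx

lemma combo_mem {s : Set (Fin n → ℚ)} (hs : Convex ℚ s) (hne : s.Nonempty) {k : ℕ}
    (c : Fin k → ℚ) (p : Fin k → (Fin n → ℚ)) (hc : ∀ i, 0 ≤ c i) (hsum : ∑ i, c i = 1)
    (hp : ∀ i, c i = 0 ∨ p i ∈ s) : ∑ i, c i • p i ∈ s := by
  obtain ⟨q, hq⟩ := hne
  have he : ∑ i, c i • p i = ∑ i, c i • (fun j => if c j = 0 then q else p j) i := by
    refine Finset.sum_congr rfl fun i _ => ?_
    by_cases h : c i = 0 <;> simp [h]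
  rw [he]
  refine hs.sum_mem (fun i _ => hc i) hsum fun i _ => ?_
  by_cases h : c i = 0
  · simp [h, hq]
  · simp only [h, if_false]
    exact (hp i).resolve_left h

lemma mem_hull_union {A B : Set (Fin n → ℚ)} {x : Fin n → ℚ}
    (hx : x ∈ convexHull ℚ (A ∪ B)) :
    ∃ (l : ℚ) (a b : Fin n → ℚ), 0 ≤ l ∧ l ≤ 1 ∧ x = l • a + (1 - l) • b ∧
      (l = 0 ∨ a ∈ convexHull ℚ A) ∧ (1 - l = 0 ∨ b ∈ convexHull ℚ B) := by
  rcases Set.eq_empty_or_nonempty A with hA | hA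
  · rw [hA, Set.empty_union] at hx
    exact ⟨0, x, x, le_rfl, zero_le_one, by simp, Or.inl rfl, Or.inr hx⟩
  rcases Set.eq_empty_or_nonempty B with hB | hB
  · rw [hB, Set.union_empty] at hx
    exact ⟨1, x, x, zero_le_one, le_rfl, by simp, Or.inr hx, Or.inl (by ring)⟩
  rw [convexHull_union hA hB, mem_convexJoin] at hx
  obtain ⟨a, ha, b, hb, u, v, hu, hv, huv, hx⟩ := hx
  refine ⟨u, a, b, hu, by linarith, ?_, Or.inr ha, Or.inr hb⟩
  rw [← hx, show (1:ℚ) - u = v by linarith]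

lemma mem_hull_triple {A B C : Set (Fin n → ℚ)} {x : Fin n → ℚ}
    (hx : x ∈ convexHull ℚ (A ∪ B ∪ C)) :
    ∃ (la lb lc : ℚ) (a b c : Fin n → ℚ), 0 ≤ la ∧ 0 ≤ lb ∧ 0 ≤ lc ∧ la + lb + lc = 1 ∧
      x = la • a + lb • b + lc • c ∧
      (la = 0 ∨ a ∈ convexHull ℚ A) ∧ (lb = 0 ∨ b ∈ convexHull ℚ B) ∧
      (lc = 0 ∨ c ∈ convexHull ℚ C) := by
  obtain ⟨l, p, c, hl0, hl1, hx, hp, hc⟩ := mem_hull_union hx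
  rcases hp with hp | hp
  · refine ⟨0, 0, 1, x, x, c, le_rfl, le_rfl, zero_le_one, by ring, by simp [hx, hp],
      Or.inl rfl, Or.inl rfl, ?_⟩
    rcases hc with h | h
    · rw [hp] at h; norm_num at h
    · exact Or.inr h
  obtain ⟨m, a, b, hm0, hm1, hp2, ha, hb⟩ := mem_hull_union hp
  refine ⟨l * m, l * (1 - m), 1 - l, a, b, c, mul_nonneg hl0 hm0, mul_nonneg hl0 (by linarith), by linarith,
    by ring, ?_, ?_, ?_, ?_⟩
  · rw [hx, hp2, smul_add, smul_smul, smul_smul]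
  · rcases ha with h | h
    · exact Or.inl (by rw [h, mul_zero])
    · exact Or.inr h
  · rcases hb with h | h
    · exact Or.inl (by rw [h, mul_zero])
    · exact Or.inr h
  · rcases hc with h | h
    · exact Or.inl h
    · exact Or.inr h

lemma hull_union_hull_left (A B : Set (Fin n → ℚ)) :
    convexHull ℚ (convexHull ℚ A ∪ B) = convexHull ℚ (A ∪ B) := by
  apply le_antisymm
  · apply convexHull_min _ (convex_convexHull ℚ _)
    apply Set.union_subset
    · exact convexHull_mono Set.subset_union_left
    · exact (Set.subset_union_right).trans (subset_convexHull ℚ _)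
  · exact convexHull_mono (Set.union_subset_union_left _ (subset_convexHull ℚ _))

lemma km (S : Finset (Fin n → ℚ)) :
    convexHull ℚ (S : Set (Fin n → ℚ)) ⊆
      convexHull ℚ ((convexHull ℚ (S : Set (Fin n → ℚ))).extremePoints ℚ) := by
  induction S using Finset.strongInduction with
  | _ S ih =>
    by_cases hall : ∀ s ∈ S, s ∈ (convexHull ℚ (S : Set (Fin n → ℚ))).extremePoints ℚ
    · exact convexHull_mono fun x hx => hall x hx
    push_neg at hall
    obtain ⟨s, hsS, hsne⟩ := hall
    have hs_mem : s ∈ convexHull ℚ (S : Set (Fin n → ℚ)) := subset_convexHull ℚ _ hsS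
    rw [mem_extremePoints] at hsne
    push_neg at hsne
    obtain ⟨x₁, hx₁, x₂, hx₂, hseg, hne⟩ := hsne hs_mem
    obtain ⟨u, v, hu, hv, huv, heq⟩ := hseg
    have hx2s : x₁ = s → x₂ = s := by
      intro h
      rw [h] at heq
      have h2 : u • s + v • s = s := by rw [← add_smul, huv, one_smul]
      have hvv : v • x₂ = v • s := by
        calc v • x₂ = (u • s + v • x₂) - u • s := by abel
          _ = s - u • s := by rw [heq]
          _ = (u • s + v • s) - u • s := by rw [h2]
          _ = v • s := by abel
      exact smul_right_injective (Fin n → ℚ) (ne_of_gt hv) hvv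
    have hx1ne : x₁ ≠ s := fun h => (hne h) (hx2s h)
    have hTne : ((S.erase s : Finset (Fin n → ℚ)) : Set (Fin n → ℚ)).Nonempty := by
      rcases Finset.eq_empty_or_nonempty (S.erase s) with h | h
      · exfalso
        have hSsub : ∀ t ∈ S, t = s := by
          intro t ht
          by_contra hts
          exact absurd (Finset.mem_erase.2 ⟨hts, ht⟩) (by simp [h])
        have : convexHull ℚ (S : Set (Fin n → ℚ)) ⊆ {s} := by
          refine convexHull_min ?_ (convex_singleton s)
          intro t ht
          simp only [Set.mem_singleton_iff]
          exact hSsub t (by exact_mod_cast ht)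
        exact hx1ne (this hx₁)
      · exact Finset.coe_nonempty.2 h
    have hins : (S : Set (Fin n → ℚ)) = insert s ((S.erase s : Finset (Fin n → ℚ)) : Set (Fin n → ℚ)) := by
      rw [← Finset.coe_insert, Finset.insert_erase hsS]
    rw [hins, convexHull_insert hTne, mem_convexJoin] at hx₁ hx₂
    obtain ⟨p₁, hp₁, y₁, hy₁, a₁, b₁, ha₁, hb₁, hab₁, hx₁e⟩ := hx₁
    obtain ⟨p₂, hp₂, y₂, hy₂, a₂, b₂, ha₂, hb₂, hab₂, hx₂e⟩ := hx₂
    rw [Set.mem_singleton_iff] at hp₁ hp₂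
    rw [hp₁] at hx₁e
    rw [hp₂] at hx₂e
    set θ : ℚ := u * a₁ + v * a₂ with hθ
    have hsum : u * b₁ + v * b₂ = 1 - θ := by
      have e1 : b₁ = 1 - a₁ := by linarith
      have e2 : b₂ = 1 - a₂ := by linarith
      rw [e1, e2, hθ]
      nlinarith [huv]
    have hub1 : 0 ≤ u * b₁ := mul_nonneg hu.le hb₁
    have hvb2 : 0 ≤ v * b₂ := mul_nonneg hv.le hb₂
    have hθle : θ ≤ 1 := by linarith
    have hθlt : θ < 1 := by
      rcases lt_or_eq_of_le hθle with h | h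
      · exact h
      · exfalso
        have h0 : u * b₁ = 0 := by linarith
        have hb₁0 : b₁ = 0 := by
          rcases mul_eq_zero.1 h0 with h' | h'
          · exact absurd h' (ne_of_gt hu)
          · exact h'
        have ha₁1 : a₁ = 1 := by linarith
        apply hx1ne
        rw [← hx₁e, ha₁1, hb₁0, one_smul, zero_smul, add_zero]
    have hpos : (0:ℚ) < 1 - θ := by linarith
    have key : (1 - θ) • s = (u * b₁) • y₁ + (v * b₂) • y₂ := by
      have h2 : s = u • (a₁ • s + b₁ • y₁) + v • (a₂ • s + b₂ • y₂) := by
        rw [hx₁e, hx₂e, heq]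
      have h3 : s = θ • s + ((u * b₁) • y₁ + (v * b₂) • y₂) := by
        rw [hθ]
        calc s = u • (a₁ • s + b₁ • y₁) + v • (a₂ • s + b₂ • y₂) := h2
          _ = (u * a₁ + v * a₂) • s + ((u * b₁) • y₁ + (v * b₂) • y₂) := by module
      rw [sub_smul, one_smul]
      calc s - θ • s = (θ • s + ((u * b₁) • y₁ + (v * b₂) • y₂)) - θ • s := by rw [← h3]
        _ = (u * b₁) • y₁ + (v * b₂) • y₂ := by abel
    have hs_eq : s = ((u * b₁)/(1-θ)) • y₁ + ((v * b₂)/(1-θ)) • y₂ := by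
      have h4 := congrArg (fun z => (1-θ)⁻¹ • z) key
      simp only [smul_smul, inv_mul_cancel₀ (ne_of_gt hpos), one_smul, smul_add] at h4
      rw [h4]
      congr 1 <;> rw [div_eq_inv_mul]
    have hsT : s ∈ convexHull ℚ ((S.erase s : Finset (Fin n → ℚ)) : Set (Fin n → ℚ)) := by
      have hmem : ((u * b₁)/(1-θ)) • y₁ + ((v * b₂)/(1-θ)) • y₂ ∈
          convexHull ℚ ((S.erase s : Finset (Fin n → ℚ)) : Set (Fin n → ℚ)) := by
        refine (convex_convexHull ℚ _) hy₁ hy₂ (by positivity) (by positivity) ?_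
        rw [← add_div, hsum, div_self (ne_of_gt hpos)]
      rwa [← hs_eq] at hmem
    have hEq : convexHull ℚ (S : Set (Fin n → ℚ)) =
        convexHull ℚ ((S.erase s : Finset (Fin n → ℚ)) : Set (Fin n → ℚ)) := by
      apply le_antisymm
      · apply convexHull_min _ (convex_convexHull ℚ _)
        rw [hins]
        exact Set.insert_subset hsT (subset_convexHull ℚ _)
      · exact convexHull_mono (by exact_mod_cast Finset.erase_subset s S)
    rw [hEq]
    exact ih (S.erase s) (Finset.erase_ssubset hsS)

lemma exists_pm_smul {S : Set (Fin n → ℚ)} {x : Fin n → ℚ} (v : Fin n → ℚ)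
    (hx : x ∈ interior S) :
    ∃ c : ℚ, 0 < c ∧ x + c • v ∈ S ∧ x - c • v ∈ S := by
  have hφ : Continuous (fun c : ℚ => x + c • v) :=
    continuous_const.add (continuous_id.smul continuous_const)
  have hU : (fun c : ℚ => x + c • v) ⁻¹' (interior S) ∈ nhds (0:ℚ) :=
    (isOpen_interior.preimage hφ).mem_nhds (by simpa using hx)
  rw [mem_nhds_iff_exists_Ioo_subset] at hU
  obtain ⟨l, u, h0m, hsub⟩ := hU
  obtain ⟨hl, hu⟩ := h0m
  refine ⟨min (u/2) (-l/2), by simp [lt_min_iff]; constructor <;> linarith, ?_, ?_⟩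
  · have : min (u/2) (-l/2) ∈ Set.Ioo l u := by
      constructor
      · have : (0:ℚ) < min (u/2) (-l/2) := by simp [lt_min_iff]; constructor <;> linarith
        linarith
      · calc min (u/2) (-l/2) ≤ u/2 := min_le_left _ _
          _ < u := by linarith
    exact interior_subset (hsub this)
  · have : -min (u/2) (-l/2) ∈ Set.Ioo l u := by
      have h1 : min (u/2) (-l/2) ≤ -l/2 := min_le_right _ _
      have h2 : (0:ℚ) < min (u/2) (-l/2) := by simp [lt_min_iff]; constructor <;> linarith
      constructor <;> [linarith; linarith]
    have := interior_subset (hsub this)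
    simpa [sub_eq_add_neg, neg_smul] using this

lemma extreme_in_subset {S s : Set (Fin n → ℚ)} {x : Fin n → ℚ}
    (hx : x ∈ S.extremePoints ℚ) (hxs : x ∈ s) (hs : s ⊆ S) : x ∈ s.extremePoints ℚ := by
  refine ⟨hxs, ?_⟩
  intro u hu v hv hseg
  exact hx.2 (hs hu) (hs hv) hseg

lemma extreme_add {A B : Set (Fin n → ℚ)} {x : Fin n → ℚ}
    (hx : x ∈ (A + B).extremePoints ℚ) :
    ∃ a ∈ A.extremePoints ℚ, ∃ b ∈ B.extremePoints ℚ, x = a + b := by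
  obtain ⟨a, ha, b, hb, hab⟩ := Set.mem_add.1 hx.1
  refine ⟨a, ⟨ha, ?_⟩, b, ⟨hb, ?_⟩, hab.symm⟩
  · intro a₁ h₁ a₂ h₂ hseg
    obtain ⟨u, v, hu, hv, huv, he⟩ := hseg
    have hseg2 : x ∈ openSegment ℚ (a₁ + b) (a₂ + b) := by
      refine ⟨u, v, hu, hv, huv, ?_⟩
      calc u • (a₁ + b) + v • (a₂ + b) = (u • a₁ + v • a₂) + (u + v) • b := by module
        _ = a + (1:ℚ) • b := by rw [he, huv]
        _ = x := by rw [one_smul]; exact hab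
    have h3 := hx.2 (Set.add_mem_add h₁ hb) (Set.add_mem_add h₂ hb) hseg2
    have := h3; rw [← hab] at this; exact add_right_cancel this
  · intro b₁ h₁ b₂ h₂ hseg
    obtain ⟨u, v, hu, hv, huv, he⟩ := hseg
    have hseg2 : x ∈ openSegment ℚ (a + b₁) (a + b₂) := by
      refine ⟨u, v, hu, hv, huv, ?_⟩
      calc u • (a + b₁) + v • (a + b₂) = (u + v) • a + (u • b₁ + v • b₂) := by module
        _ = (1:ℚ) • a + b := by rw [he, huv]
        _ = x := by rw [one_smul]; exact hab
    have h3 := hx.2 (Set.add_mem_add ha h₁) (Set.add_mem_add ha h₂) hseg2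
    have := h3; rw [← hab] at this; exact add_left_cancel this

lemma lattice_decomp {v : Fin n → ℚ} (hv : IsLatticePt v) (h0 : v ≠ 0) :
    ∃ (d : ℤ) (u : Fin n → ℚ), 1 ≤ d ∧ IsLatticePt u ∧ IsPrimitivePt u ∧ v = (d:ℚ) • u := by
  choose z hz using hv
  have hz0 : ∃ i, z i ≠ 0 := by
    by_contra h
    push_neg at h
    apply h0
    funext i
    rw [hz i, h i]
    simp
  set d := Finset.univ.gcd z with hd
  have hd0 : d ≠ 0 := by
    intro h
    obtain ⟨i, hi⟩ := hz0
    exact hi (Finset.gcd_eq_zero_iff.1 h i (Finset.mem_univ i))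
  have hdnn : 0 ≤ d := by
    have h1 : normalize d = d := Finset.normalize_gcd
    have h2 : |d| = normalize d := Int.abs_eq_normalize d
    rw [h1] at h2
    rw [← h2]
    exact abs_nonneg d
  have hdvd : ∀ i, d ∣ z i := fun i => Finset.gcd_dvd (Finset.mem_univ i)
  have hcancel : ∀ i, d * (z i / d) = z i := fun i => Int.mul_ediv_cancel' (hdvd i)
  refine ⟨d, fun i => ((z i / d : ℤ) : ℚ), by omega, fun i => ⟨z i / d, rfl⟩, ?_, ?_⟩
  · refine ⟨fun i => z i / d, fun i => rfl, ?_⟩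
    have hge : Finset.univ.gcd (fun i => d * (z i / d)) = d := by
      rw [show (fun i => d * (z i / d)) = z from funext hcancel]
    rw [Finset.gcd_mul_left, Int.normalize_of_nonneg hdnn] at hge
    have : d * 1 = d * Finset.univ.gcd (fun i => z i / d) := by rw [mul_one]; exact hge.symm
    exact (mul_left_cancel₀ hd0 this).symm
  · funext i
    have : (z i : ℚ) = ((d * (z i / d) : ℤ) : ℚ) := by rw [hcancel i]
    rw [hz i, this]
    push_cast
    simp [Pi.smul_apply]

lemma pairing_sub (w : Fin n → ℤ) (x y : Fin n → ℚ) :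
    pairing w (x - y) = pairing w x - pairing w y := by
  simp [pairing, mul_sub, Finset.sum_sub_distrib]

lemma pairing_wvec_pos {w : Fin n → ℤ} (hw : w ≠ 0) :
    0 < pairing w (fun i => (w i : ℚ)) := by
  have : ∃ i, w i ≠ 0 := by
    by_contra h
    push_neg at h
    exact hw (funext h)
  obtain ⟨i, hi⟩ := this
  unfold pairing
  refine Finset.sum_pos' (fun j _ => mul_self_nonneg _) ⟨i, Finset.mem_univ i, ?_⟩
  have : ((w i : ℚ)) ≠ 0 := Int.cast_ne_zero.2 hi
  exact mul_self_pos.2 this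

lemma wvec_ne {w : Fin n → ℤ} (hw : w ≠ 0) : (fun i => (w i : ℚ)) ≠ (0 : Fin n → ℚ) := by
  intro h
  have := pairing_wvec_pos hw
  rw [h] at this
  simp [pairing] at this

lemma interior_pairing_bounds {w : Fin n → ℤ} (hw : w ≠ 0) {S : Set (Fin n → ℚ)}
    (hub : ∀ p ∈ S, pairing w p ≤ 1) (hlb : ∀ p ∈ S, -1 ≤ pairing w p)
    {x : Fin n → ℚ} (hx : x ∈ interior S) : -1 < pairing w x ∧ pairing w x < 1 := by
  obtain ⟨c, hc, h1, h2⟩ := exists_pm_smul (fun i => (w i : ℚ)) hx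
  have hcp := mul_pos hc (pairing_wvec_pos hw)
  have e1 := hub _ h1
  have e2 := hlb _ h2
  rw [pairing_add, pairing_smul] at e1
  rw [pairing_sub, pairing_smul] at e2
  constructor <;> linarith

lemma combo_interior {S : Set (Fin n → ℚ)} (hS : Convex ℚ S) {a b : Fin n → ℚ} {θ : ℚ}
    (ha : a ∈ interior S) (hb : b ∈ S) (hθ : 0 < θ) (hθ1 : θ ≤ 1) :
    θ • a + (1-θ) • b ∈ interior S := by
  have hΦ : Continuous (fun y : Fin n → ℚ => θ⁻¹ • (y - (1-θ) • b)) :=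
    ((continuous_id.sub continuous_const).const_smul θ⁻¹)
  set U := (fun y : Fin n → ℚ => θ⁻¹ • (y - (1-θ) • b)) ⁻¹' (interior S) with hUdef
  have hUopen : IsOpen U := isOpen_interior.preimage hΦ
  have hcm : θ • a + (1-θ) • b ∈ U := by
    show θ⁻¹ • (θ • a + (1-θ) • b - (1-θ) • b) ∈ interior S
    rw [add_sub_cancel_right, smul_smul, inv_mul_cancel₀ (ne_of_gt hθ), one_smul]
    exact ha
  have hUS : U ⊆ S := by
    intro y hy
    have h1 : θ⁻¹ • (y - (1-θ) • b) ∈ S := interior_subset hy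
    have h2 : y = θ • (θ⁻¹ • (y - (1-θ) • b)) + (1-θ) • b := by
      rw [smul_smul, mul_inv_cancel₀ (ne_of_gt hθ), one_smul, sub_add_cancel]
    rw [h2]
    exact hS h1 hb hθ.le (by linarith) (by ring)
  exact interior_maximal hUS hUopen hcm

lemma zero_not_extreme {S : Set (Fin n → ℚ)} {v : Fin n → ℚ} (hv : v ≠ 0)
    (h0 : (0 : Fin n → ℚ) ∈ interior S) : (0 : Fin n → ℚ) ∉ S.extremePoints ℚ := by
  intro hex
  obtain ⟨c, hc, h1, h2⟩ := exists_pm_smul v h0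
  rw [zero_add] at h1
  rw [zero_sub] at h2
  have hseg : (0 : Fin n → ℚ) ∈ openSegment ℚ (c • v) (-(c • v)) := by
    refine ⟨1/2, 1/2, by norm_num, by norm_num, by norm_num, by module⟩
  have h3 := hex.2 h1 h2 hseg
  have h4 : c • v = 0 := h3
  rcases smul_eq_zero.1 h4 with h | h
  · exact (ne_of_gt hc) h
  · exact hv h

lemma prim_of_extreme {S : Set (Fin n → ℚ)} (hSc : Convex ℚ S) {vdir : Fin n → ℚ}
    (hvdir : vdir ≠ 0) (h0 : (0 : Fin n → ℚ) ∈ interior S)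
    (hcan : ∀ x ∈ interior S, IsLatticePt x → x = 0)
    {p : Fin n → ℚ} (hp : p ∈ S.extremePoints ℚ) (hpl : IsLatticePt p) : IsPrimitivePt p := by
  have hp0 : p ≠ 0 := by
    intro h
    rw [h] at hp
    exact zero_not_extreme hvdir h0 hp
  obtain ⟨d, u, hd1, hul, hup, he⟩ := lattice_decomp hpl hp0
  rcases eq_or_lt_of_le hd1 with h | h
  · obtain ⟨z, hz, hg⟩ := hup
    refine ⟨z, fun i => ?_, hg⟩
    rw [he, ← h]
    push_cast
    rw [one_smul]
    exact hz i
  · exfalso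
    have hdQ : (2:ℚ) ≤ (d:ℚ) := by exact_mod_cast h
    have hθpos : (0:ℚ) < 1 - 1/(d:ℚ) := by
      have : 1/(d:ℚ) ≤ 1/2 := by
        apply div_le_div_of_nonneg_left <;> linarith
      linarith
    have hu_int : u ∈ interior S := by
      have hmem := combo_interior hSc h0 (extremePoints_subset hp)
        hθpos (by
          have : (0:ℚ) < 1/(d:ℚ) := by positivity
          linarith)
      rw [smul_zero, zero_add] at hmem
      have he2 : (1 - (1 - 1/(d:ℚ))) • p = u := by
        rw [show (1 - (1 - 1/(d:ℚ))) = 1/(d:ℚ) by ring, he, smul_smul]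
        rw [show (1:ℚ)/(d:ℚ) * (d:ℚ) = 1 by field_simp, one_smul]
      rwa [he2] at hmem
    have := hcan u hu_int hul
    apply hp0
    rw [he, this, smul_zero]

lemma core_shift {w : Fin n → ℤ} {X Y Z Fs : Set (Fin n → ℚ)}
    (hXc : Convex ℚ X) (hYc : Convex ℚ Y) (hZc : Convex ℚ Z) (hFc : Convex ℚ Fs)
    (hX : ∀ x ∈ X, pairing w x = -1) (hY : ∀ x ∈ Y, pairing w x = 0)
    (hZ : ∀ x ∈ Z, pairing w x = 1) (hF : ∀ x ∈ Fs, pairing w x = 0)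
    {xm f₀ : Fin n → ℚ} (hxm : xm ∈ X) (hf₀ : f₀ ∈ Fs)
    {p : Fin n → ℚ} (hp : p ∈ convexHull ℚ ((X + Fs) ∪ Y ∪ Z)) {t : ℚ}
    (ht : pairing w p = t) (ht0 : 0 ≤ t) :
    p + t • f₀ ∈ convexHull ℚ (X ∪ Y ∪ (Z + Fs)) := by
  have hXF : ∀ s ∈ X + Fs, pairing w s = -1 := by
    intro s hs
    obtain ⟨ξ, hξ, φ, hφ, rfl⟩ := Set.mem_add.1 hs
    rw [pairing_add, hX ξ hξ, hF φ hφ, add_zero]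
  have hZF : ∀ s ∈ Z + Fs, pairing w s = 1 := by
    intro s hs
    obtain ⟨ζ, hζ, φ, hφ, rfl⟩ := Set.mem_add.1 hs
    rw [pairing_add, hZ ζ hζ, hF φ hφ, add_zero]
  obtain ⟨la, lb, lc, a, b, c, h0a, h0b, h0c, hsum, hxe, hA, hB, hC⟩ := mem_hull_triple hp
  have e_a : la * pairing w a = la * (-1) := by
    rcases hA with h | h
    · rw [h, zero_mul, zero_mul]
    · rw [hull_pairing_eq w hXF h]
  have e_b : lb * pairing w b = 0 := by
    rcases hB with h | h
    · rw [h, zero_mul]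
    · rw [hull_pairing_eq w hY h, mul_zero]
  have e_c : lc * pairing w c = lc := by
    rcases hC with h | h
    · rw [h, zero_mul]
    · rw [hull_pairing_eq w hZ h, mul_one]
  have hpair : pairing w p = la * pairing w a + lb * pairing w b + lc * pairing w c := by
    rw [hxe, pairing_add, pairing_add, pairing_smul, pairing_smul, pairing_smul]
  have hlc : lc = la + t := by
    rw [e_a, e_b, e_c, ht] at hpair
    linarith
  have hXFc : Convex ℚ (X + Fs) := hXc.add hFc
  obtain ⟨ξ, hξ, φ, hφ, key⟩ :
      ∃ ξ ∈ X, ∃ φ ∈ Fs, la • a = la • ξ + la • φ := by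
    rcases hA with h | h
    · exact ⟨xm, hxm, f₀, hf₀, by rw [h]; simp⟩
    · rw [hXFc.convexHull_eq] at h
      obtain ⟨ξ, hξ, φ, hφ, rfl⟩ := Set.mem_add.1 h
      exact ⟨ξ, hξ, φ, hφ, smul_add la ξ φ⟩
  have hC' : lc = 0 ∨ c ∈ Z := by
    rcases hC with h | h
    · exact Or.inl h
    · exact Or.inr (hZc.convexHull_eq ▸ h)
  set Q := convexHull ℚ (X ∪ Y ∪ (Z + Fs)) with hQdef
  have hXQ : X ⊆ Q := (Set.subset_union_left.trans Set.subset_union_left).trans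
    (subset_convexHull ℚ _)
  have hYQ : Y ⊆ Q := (Set.subset_union_right.trans Set.subset_union_left).trans
    (subset_convexHull ℚ _)
  have hZFQ : Z + Fs ⊆ Q := Set.subset_union_right.trans (subset_convexHull ℚ _)
  have hQconv : Convex ℚ Q := convex_convexHull ℚ _
  have hQne : Q.Nonempty := ⟨xm, hXQ hxm⟩
  have heq : p + t • f₀ =
      ∑ i : Fin 4, ![la, lb, la, t] i • ![ξ, b, c + φ, c + f₀] i := by
    rw [Fin.sum_univ_four]
    simp only [Matrix.cons_val_zero, Matrix.cons_val_one, Matrix.head_cons,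
      Matrix.cons_val_two, Matrix.tail_cons, Matrix.cons_val_three]
    rw [hxe, key, hlc]
    module
  rw [heq]
  refine combo_mem hQconv hQne _ _ ?_ ?_ ?_
  · intro i
    fin_cases i <;> simp [h0a, h0b, ht0]
  · rw [Fin.sum_univ_four]
    simp only [Matrix.cons_val_zero, Matrix.cons_val_one, Matrix.head_cons,
      Matrix.cons_val_two, Matrix.tail_cons, Matrix.cons_val_three]
    linarith
  · intro i
    fin_cases i
    · exact Or.inr (hXQ hξ)
    · rcases hB with h | h
      · exact Or.inl h
      · exact Or.inr (hYQ (hYc.convexHull_eq ▸ h))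
    · rcases hC' with h | h
      · left
        have hla : la = 0 := by linarith [hlc, h, ht0, h0a]
        simp [Matrix.cons_val_succ, hla]
      · exact Or.inr (hZFQ (Set.add_mem_add h hφ))
    · rcases hC' with h | h
      · left
        have hta : t = 0 := by linarith [hlc, h, ht0, h0a]
        simp [Matrix.cons_val_succ, hta]
      · exact Or.inr (hZFQ (Set.add_mem_add h hf₀))

lemma core_interior {w : Fin n → ℤ} (hw : w ≠ 0) {X Y Z Fs : Set (Fin n → ℚ)}
    (hXc : Convex ℚ X) (hYc : Convex ℚ Y) (hZc : Convex ℚ Z) (hFc : Convex ℚ Fs)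
    (hX : ∀ x ∈ X, pairing w x = -1) (hY : ∀ x ∈ Y, pairing w x = 0)
    (hZ : ∀ x ∈ Z, pairing w x = 1) (hF : ∀ x ∈ Fs, pairing w x = 0)
    (hXne : X.Nonempty) (hFne : Fs.Nonempty)
    {x : Fin n → ℚ} (hx0 : pairing w x = 0)
    (hx : x ∈ interior (convexHull ℚ ((X + Fs) ∪ Y ∪ Z))) :
    x ∈ interior (convexHull ℚ (X ∪ Y ∪ (Z + Fs))) := by
  obtain ⟨f₀, hf₀⟩ := hFne
  obtain ⟨xm, hxm⟩ := hXne
  set P := convexHull ℚ ((X + Fs) ∪ Y ∪ Z) with hPdef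
  set Q := convexHull ℚ (X ∪ Y ∪ (Z + Fs)) with hQdef
  have hQconv : Convex ℚ Q := convex_convexHull ℚ _
  have hXQ : X ⊆ Q := (Set.subset_union_left.trans Set.subset_union_left).trans
    (subset_convexHull ℚ _)
  set U0 : Set (Fin n → ℚ) := (pairing w) ⁻¹' (Set.Ioo (-1 : ℚ) 1) with hU0def
  have hU0open : IsOpen U0 := isOpen_Ioo.preimage (pairing_continuous w)
  set U1 : Set (Fin n → ℚ) :=
    (fun y => y - (pairing w y) • f₀) ⁻¹' (interior P) with hU1def
  have hU1open : IsOpen U1 := by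
    apply isOpen_interior.preimage
    exact continuous_id.sub ((pairing_continuous w).smul continuous_const)
  set Φm : (Fin n → ℚ) → (Fin n → ℚ) :=
    fun y => (1 + pairing w y)⁻¹ • (y + (pairing w y) • xm) with hΦmdef
  set U2 : Set (Fin n → ℚ) := U0 ∩ Φm ⁻¹' (interior P) with hU2def
  have hU2open : IsOpen U2 := by
    apply ContinuousOn.isOpen_inter_preimage _ hU0open isOpen_interior
    refine ContinuousOn.smul (f := fun y => (1 + pairing w y)⁻¹) (g := fun y => y + (pairing w y) • xm) ?_ ?_
    · apply ContinuousOn.inv₀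
      · exact (continuous_const.add (pairing_continuous w)).continuousOn
      · intro y hy
        have h1 : pairing w y ∈ Set.Ioo (-1 : ℚ) 1 := hy
        have := h1.1
        intro h
        rw [add_comm] at h
        have : pairing w y = -1 := by linarith [eq_neg_of_add_eq_zero_left h]
        linarith [h1.1]
    · exact (continuous_id.add ((pairing_continuous w).smul continuous_const)).continuousOn
  have hmem : x ∈ U0 ∩ U1 ∩ U2 := by
    refine ⟨⟨?_, ?_⟩, ?_, ?_⟩
    · show pairing w x ∈ Set.Ioo (-1 : ℚ) 1
      rw [hx0]
      constructor <;> norm_num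
    · show x - (pairing w x) • f₀ ∈ interior P
      rw [hx0, zero_smul, sub_zero]
      exact hx
    · show pairing w x ∈ Set.Ioo (-1 : ℚ) 1
      rw [hx0]
      constructor <;> norm_num
    · show Φm x ∈ interior P
      rw [hΦmdef]
      simp only [hx0, zero_smul, add_zero, inv_one, one_smul]
      exact hx
  have hsub : U0 ∩ U1 ∩ U2 ⊆ Q := by
    rintro y ⟨⟨hy0, hy1⟩, hy2⟩
    have hIoo : pairing w y ∈ Set.Ioo (-1 : ℚ) 1 := hy0
    set t := pairing w y with htdef
    rcases le_or_gt 0 t with hts | hts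
    · have hp : y - t • f₀ ∈ P := interior_subset hy1
      have hpt : pairing w (y - t • f₀) = t := by
        rw [pairing_sub, pairing_smul, hF f₀ hf₀, mul_zero, sub_zero]
      have := core_shift hXc hYc hZc hFc hX hY hZ hF hxm hf₀ hp hpt hts
      rwa [sub_add_cancel] at this
    · have hq : Φm y ∈ P := interior_subset hy2.2
      have h1t : (0:ℚ) < 1 + t := by linarith [hIoo.1]
      have hqt : pairing w (Φm y) = 0 := by
        rw [hΦmdef]
        simp only
        rw [pairing_smul, pairing_add, pairing_smul, hX xm hxm]
        ring
      have hqQ : Φm y ∈ Q := by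
        have := core_shift hXc hYc hZc hFc hX hY hZ hF hxm hf₀ hq hqt le_rfl
        rwa [zero_smul, add_zero] at this
      have hyd : y = (1 + t) • (Φm y) + (-t) • xm := by
        rw [hΦmdef]
        simp only
        rw [smul_smul, mul_inv_cancel₀ (ne_of_gt h1t), one_smul]
        module
      rw [hyd]
      exact hQconv hqQ (hXQ hxm) h1t.le (by linarith) (by ring)
  exact interior_maximal hsub (hU0open.inter hU1open |>.inter hU2open) hmem

lemma lattice_add {x y : Fin n → ℚ} (hx : IsLatticePt x) (hy : IsLatticePt y) :
    IsLatticePt (x + y) := by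
  intro i
  obtain ⟨a, ha⟩ := hx i
  obtain ⟨b, hb⟩ := hy i
  exact ⟨a + b, by rw [Pi.add_apply, ha, hb]; push_cast; ring⟩

lemma hull_union3 (A B C : Set (Fin n → ℚ)) :
    convexHull ℚ (convexHull ℚ A ∪ convexHull ℚ B ∪ convexHull ℚ C) =
      convexHull ℚ (A ∪ B ∪ C) := by
  apply le_antisymm
  · apply convexHull_min _ (convex_convexHull ℚ _)
    refine Set.union_subset (Set.union_subset ?_ ?_) ?_
    · exact convexHull_mono (Set.subset_union_left.trans Set.subset_union_left)
    · exact convexHull_mono ((Set.subset_union_right).trans Set.subset_union_left)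
    · exact convexHull_mono Set.subset_union_right
  · refine convexHull_mono ?_
    refine Set.union_subset_union (Set.union_subset_union ?_ ?_) ?_ <;>
      exact subset_convexHull ℚ _

lemma height_tri {w : Fin n → ℤ} {x : Fin n → ℚ} (hl : IsLatticePt x)
    (h1 : -1 ≤ pairing w x) (h2 : pairing w x ≤ 1) :
    pairing w x = -1 ∨ pairing w x = 0 ∨ pairing w x = 1 := by
  obtain ⟨m, hm⟩ := pairing_int w hl
  rw [hm] at h1 h2 ⊢
  have hm1 : -1 ≤ m := by exact_mod_cast h1
  have hm2 : m ≤ 1 := by exact_mod_cast h2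
  have : m = -1 ∨ m = 0 ∨ m = 1 := by omega
  rcases this with h | h | h <;> rw [h] <;> push_cast <;> simp

lemma eval_isLinear (i : Fin n) : IsLinearMap ℚ (fun y : Fin n → ℚ => y i) :=
  ⟨fun _ _ => rfl, fun _ _ => rfl⟩

lemma lattice_finite (S : Finset (Fin n → ℚ)) :
    {x : Fin n → ℚ | IsLatticePt x ∧ x ∈ convexHull ℚ (S : Set (Fin n → ℚ))}.Finite := by
  rcases Finset.eq_empty_or_nonempty S with rfl | hne
  · convert Set.finite_empty
    ext x
    simp [convexHull_empty]
  set lo : Fin n → ℚ := fun i => S.inf' hne (fun p => p i) with hlo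
  set hi : Fin n → ℚ := fun i => S.sup' hne (fun p => p i) with hhi
  have hbound : ∀ x ∈ convexHull ℚ (S : Set (Fin n → ℚ)), ∀ i, lo i ≤ x i ∧ x i ≤ hi i := by
    intro x hx i
    constructor
    · have hsub : convexHull ℚ (S : Set (Fin n → ℚ)) ⊆ {y | lo i ≤ y i} := by
        refine convexHull_min ?_ (convex_halfSpace_ge (eval_isLinear i) (lo i))
        intro p hp
        show lo i ≤ p i
        exact Finset.inf'_le (fun q : Fin n → ℚ => q i) (by exact_mod_cast hp)
      exact hsub hx
    · have hsub : convexHull ℚ (S : Set (Fin n → ℚ)) ⊆ {y | y i ≤ hi i} := by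
        refine convexHull_min ?_ (convex_halfSpace_le (eval_isLinear i) (hi i))
        intro p hp
        show p i ≤ hi i
        exact Finset.le_sup' (fun q : Fin n → ℚ => q i) (by exact_mod_cast hp)
      exact hsub hx
  have hfin : (Set.pi Set.univ (fun i => Set.Icc ⌈lo i⌉ ⌊hi i⌋)).Finite :=
    Set.Finite.pi fun i => Set.finite_Icc _ _
  apply Set.Finite.subset (hfin.image (fun z : Fin n → ℤ => fun i => ((z i : ℚ))))
  rintro x ⟨hlat, hmem⟩
  choose z hz using hlat
  refine ⟨z, ?_, funext fun i => (hz i).symm⟩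
  intro i _
  obtain ⟨hl, hr⟩ := hbound x hmem i
  rw [hz i] at hl hr
  exact ⟨Int.ceil_le.2 hl, Int.le_floor.2 hr⟩

lemma hull_triple_heights {w : Fin n → ℤ} {A B C : Set (Fin n → ℚ)}
    (hA : ∀ v ∈ A, pairing w v = -1) (hB : ∀ v ∈ B, pairing w v = 0)
    (hC : ∀ v ∈ C, pairing w v = 1) {p : Fin n → ℚ}
    (hp : p ∈ convexHull ℚ (A ∪ B ∪ C)) :
    ∃ (la lb lc : ℚ) (a b c : Fin n → ℚ), 0 ≤ la ∧ 0 ≤ lb ∧ 0 ≤ lc ∧ la + lb + lc = 1 ∧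
      p = la • a + lb • b + lc • c ∧
      (la = 0 ∨ a ∈ convexHull ℚ A) ∧ (lb = 0 ∨ b ∈ convexHull ℚ B) ∧
      (lc = 0 ∨ c ∈ convexHull ℚ C) ∧ pairing w p = lc - la := by
  obtain ⟨la, lb, lc, a, b, c, h0a, h0b, h0c, hsum, hxe, hA', hB', hC'⟩ := mem_hull_triple hp
  refine ⟨la, lb, lc, a, b, c, h0a, h0b, h0c, hsum, hxe, hA', hB', hC', ?_⟩
  have e_a : la * pairing w a = la * (-1) := by
    rcases hA' with h | h
    · rw [h, zero_mul, zero_mul]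
    · rw [hull_pairing_eq w hA h]
  have e_b : lb * pairing w b = 0 := by
    rcases hB' with h | h
    · rw [h, zero_mul]
    · rw [hull_pairing_eq w hB h, mul_zero]
  have e_c : lc * pairing w c = lc := by
    rcases hC' with h | h
    · rw [h, zero_mul]
    · rw [hull_pairing_eq w hC h, mul_one]
  rw [hxe, pairing_add, pairing_add, pairing_smul, pairing_smul, pairing_smul,
    e_a, e_b, e_c]
  ring

end MutationAux

/-- For a width-two vector `w` (heights of `P` range from `-1` to `1`), a combinatorial
mutation `Q = mut_w(P,F)` is a canonical polytope if and only if `P` is. -/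
theorem mutation_canonical_iff_width_two {n : ℕ} (w : Fin n → ℤ) (P F : Set (Fin n → ℚ))
    (G : ℤ → Set (Fin n → ℚ)) (hP : IsLatticePolytope P) (hw : IsPrimitive w)
    (hdata : IsMutData w P F G)
    (hmin : (∀ x ∈ P, (-1 : ℚ) ≤ pairing w x) ∧ ∃ x ∈ P, pairing w x = -1)
    (hmax : (∀ x ∈ P, pairing w x ≤ 1) ∧ ∃ x ∈ P, pairing w x = 1) :
    IsCanonical (mutation w P F G) ↔ IsCanonical P := by
  classical
  have hwne : w ≠ 0 := by
    intro h
    have h0 : Finset.univ.gcd w = 0 := Finset.gcd_eq_zero_iff.2 (fun i _ => by rw [h]; rfl)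
    rw [hw] at h0
    exact one_ne_zero h0
  obtain ⟨SP, hSPlat, hSPeq⟩ := hP
  obtain ⟨⟨SF, hSFlat, hSFeq⟩, hFne, hF0, hGdat⟩ := hdata
  have hPc : Convex ℚ P := hSPeq ▸ convex_convexHull ℚ _
  have hFc : Convex ℚ F := hSFeq ▸ convex_convexHull ℚ _
  set S0 := wSlice w 0 P with hS0def
  set S1 := wSlice w 1 P with hS1def
  set G1 := G (-1) with hG1def
  have hG1dat := hGdat (-1) (by norm_num)
  have hcast1 : (-(((-1):ℤ):ℚ)) = (1:ℚ) := by norm_num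
  have hGS' : G1 + F ⊆ wSlice w (-1) P := by
    have := hG1dat.2.2
    rwa [hcast1, one_smul] at this
  have hGV' : {v | v ∈ P.extremePoints ℚ ∧ pairing w v = -1} ⊆ G1 + F := by
    intro v hv
    have h2 := hG1dat.2.1 (show v ∈ {v | v ∈ P.extremePoints ℚ ∧
        pairing w v = (((-1):ℤ):ℚ)} from ⟨hv.1, by rw [hv.2]; norm_num⟩)
    rwa [hcast1, one_smul] at h2
  have hSlice_sub_P : ∀ h : ℤ, wSlice w h P ⊆ P :=
    fun h => convexHull_min (fun y hy => hy.1) hPc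
  have hS0h : ∀ x ∈ S0, pairing w x = 0 := by
    intro x hx
    have := hull_pairing_eq w (fun y (hy : y ∈ P ∧ IsLatticePt y ∧
      pairing w y = (((0):ℤ):ℚ)) => hy.2.2) hx
    simpa using this
  have hS1h : ∀ x ∈ S1, pairing w x = 1 := by
    intro x hx
    have := hull_pairing_eq w (fun y (hy : y ∈ P ∧ IsLatticePt y ∧
      pairing w y = (((1):ℤ):ℚ)) => hy.2.2) hx
    simpa using this
  have hSm1h : ∀ x ∈ wSlice w (-1) P, pairing w x = -1 := by
    intro x hx
    have := hull_pairing_eq w (fun y (hy : y ∈ P ∧ IsLatticePt y ∧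
      pairing w y = (((-1):ℤ):ℚ)) => hy.2.2) hx
    simpa using this
  have hG1h : ∀ g ∈ G1, pairing w g = -1 := by
    intro g hg
    obtain ⟨f, hf⟩ := hFne
    have hmem : g + f ∈ wSlice w (-1) P := hGS' (Set.add_mem_add hg hf)
    have h1 := hSm1h _ hmem
    rw [pairing_add, hF0 f hf, add_zero] at h1
    exact h1
  have hsl_lo : ∀ h : ℤ, h ≤ -2 → wSlice w h P = ∅ := by
    intro h hle
    have hbase : {x | x ∈ P ∧ IsLatticePt x ∧ pairing w x = (h:ℚ)} = ∅ := by
      ext x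
      simp only [Set.mem_setOf_eq, Set.mem_empty_iff_false, iff_false, not_and]
      intro hxP _ hxp
      have h1 := hmin.1 x hxP
      rw [hxp] at h1
      have h2 : (h:ℚ) ≤ (((-2):ℤ):ℚ) := by exact_mod_cast hle
      push_cast at h2
      linarith
    unfold wSlice
    rw [hbase, convexHull_empty]
  have hsl_hi : ∀ h : ℤ, 2 ≤ h → wSlice w h P = ∅ := by
    intro h hle
    have hbase : {x | x ∈ P ∧ IsLatticePt x ∧ pairing w x = (h:ℚ)} = ∅ := by
      ext x
      simp only [Set.mem_setOf_eq, Set.mem_empty_iff_false, iff_false, not_and]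
      intro hxP _ hxp
      have h1 := hmax.1 x hxP
      rw [hxp] at h1
      have h2 : (((2):ℤ):ℚ) ≤ (h:ℚ) := by exact_mod_cast hle
      push_cast at h2
      linarith
    unfold wSlice
    rw [hbase, convexHull_empty]
  have hGempty : ∀ h : ℤ, h ≤ -2 → G h = ∅ := by
    intro h hle
    rw [Set.eq_empty_iff_forall_notMem]
    intro g hg
    obtain ⟨f, hf⟩ := hFne
    have hmem : g + (-(h:ℚ)) • f ∈ G h + (-(h:ℚ)) • F :=
      Set.add_mem_add hg (Set.smul_mem_smul_set hf)
    have h2 := (hGdat h (by omega)).2.2 hmem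
    rw [hsl_lo h hle] at h2
    exact h2
  have hQeq : mutation w P F G = convexHull ℚ (G1 ∪ S0 ∪ (S1 + F)) := by
    unfold mutation
    congr 1
    ext y
    simp only [Set.mem_union, Set.mem_iUnion, exists_prop]
    constructor
    · rintro (⟨h, hneg, hy⟩ | ⟨h, hpos, hy⟩)
      · rcases eq_or_ne h (-1) with rfl | hne
        · exact Or.inl (Or.inl hy)
        · exfalso
          have hle : h ≤ -2 := by omega
          rw [hGempty h hle] at hy
          exact hy
      · rcases eq_or_ne h 0 with rfl | h0
        · rw [Int.cast_zero, Set.zero_smul_set hFne] at hy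
          refine Or.inl (Or.inr ?_)
          simpa using hy
        · rcases eq_or_ne h 1 with rfl | h1
          · rw [Int.cast_one, one_smul] at hy
            exact Or.inr hy
          · exfalso
            have hle : 2 ≤ h := by omega
            rw [hsl_hi h hle, Set.empty_add] at hy
            exact hy
    · rintro ((hy | hy) | hy)
      · exact Or.inl ⟨-1, by norm_num, hy⟩
      · refine Or.inr ⟨0, le_rfl, ?_⟩
        rw [Int.cast_zero, Set.zero_smul_set hFne]
        simpa using hy
      · exact Or.inr ⟨1, by norm_num, by rw [Int.cast_one, one_smul]; exact hy⟩
  -- Krein-Milman representation of P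
  have hKM : P = convexHull ℚ (P.extremePoints ℚ) := by
    apply le_antisymm
    · have h1 : P ⊆ convexHull ℚ ((convexHull ℚ (SP : Set (Fin n → ℚ))).extremePoints ℚ) := by
        rw [hSPeq]
        exact km SP
      rwa [← hSPeq] at h1
    · exact convexHull_min extremePoints_subset hPc
  have hVlat : ∀ v ∈ P.extremePoints ℚ, IsLatticePt v := by
    intro v hv
    apply hSPlat
    have h2 : v ∈ (convexHull ℚ (SP : Set (Fin n → ℚ))).extremePoints ℚ := by
      rwa [← hSPeq]
    exact_mod_cast extremePoints_convexHull_subset h2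
  set VA := {v | v ∈ P.extremePoints ℚ ∧ pairing w v = -1} with hVAdef
  set VB := {v | v ∈ P.extremePoints ℚ ∧ pairing w v = 0} with hVBdef
  set VC := {v | v ∈ P.extremePoints ℚ ∧ pairing w v = 1} with hVCdef
  have hVsplit : P.extremePoints ℚ = VA ∪ VB ∪ VC := by
    ext v
    constructor
    · intro hv
      rcases height_tri (hVlat v hv) (hmin.1 v (extremePoints_subset hv))
        (hmax.1 v (extremePoints_subset hv)) with h | h | h
      · exact Or.inl (Or.inl ⟨hv, h⟩)
      · exact Or.inl (Or.inr ⟨hv, h⟩)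
      · exact Or.inr ⟨hv, h⟩
    · rintro ((h | h) | h) <;> exact h.1
  have hVAh : ∀ v ∈ VA, pairing w v = -1 := fun v hv => hv.2
  have hVBh : ∀ v ∈ VB, pairing w v = 0 := fun v hv => hv.2
  have hVCh : ∀ v ∈ VC, pairing w v = 1 := fun v hv => hv.2
  set X := convexHull ℚ G1 with hXdef
  have hXh : ∀ x ∈ X, pairing w x = -1 := fun x hx => hull_pairing_eq w hG1h hx
  have hVBS0 : VB ⊆ S0 := by
    intro v hv
    exact subset_convexHull ℚ _ ⟨extremePoints_subset hv.1, hVlat v hv.1, by rw [hv.2]; simp⟩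
  have hVCS1 : VC ⊆ S1 := by
    intro v hv
    exact subset_convexHull ℚ _ ⟨extremePoints_subset hv.1, hVlat v hv.1, by rw [hv.2]; simp⟩
  have hXF_P : X + F ⊆ P := by
    have h1 : X + F = convexHull ℚ (G1 + F) := by
      calc X + F = convexHull ℚ G1 + convexHull ℚ F := by rw [hFc.convexHull_eq]
        _ = convexHull ℚ (G1 + F) := (convexHull_add _ _).symm
    rw [h1]
    calc convexHull ℚ (G1 + F) ⊆ convexHull ℚ (wSlice w (-1) P) := convexHull_mono hGS'
      _ = wSlice w (-1) P := (convex_convexHull ℚ _).convexHull_eq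
      _ ⊆ P := hSlice_sub_P (-1)
  have hPtriple : P = convexHull ℚ (VA ∪ VB ∪ VC) := by rw [← hVsplit, ← hKM]
  have hPcore : P = convexHull ℚ ((X + F) ∪ S0 ∪ S1) := by
    apply le_antisymm
    · rw [hKM, hVsplit]
      apply convexHull_mono
      refine Set.union_subset_union (Set.union_subset_union ?_ hVBS0) hVCS1
      exact hGV'.trans (Set.add_subset_add (subset_convexHull ℚ G1) (le_refl F))
    · apply convexHull_min _ hPc
      exact Set.union_subset (Set.union_subset hXF_P (hSlice_sub_P 0)) (hSlice_sub_P 1)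
  have hQcore : mutation w P F G = convexHull ℚ (X ∪ S0 ∪ (S1 + F)) := by
    rw [hQeq, Set.union_assoc, hXdef, Set.union_assoc]
    exact (hull_union_hull_left G1 (S0 ∪ (S1 + F))).symm
  -- nonemptiness
  have hG1ne : G1.Nonempty := by
    obtain ⟨p, hpP, hp1⟩ := hmin.2
    rw [hPtriple] at hpP
    obtain ⟨la, lb, lc, a, b, c, h0a, h0b, h0c, hsum, hxe, hA, hB, hC, hpair⟩ :=
      hull_triple_heights hVAh hVBh hVCh hpP
    rw [hp1] at hpair
    have hla : la ≠ 0 := by intro h; rw [h] at hpair hsum; linarith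
    have haVA : a ∈ convexHull ℚ VA := hA.resolve_left hla
    obtain ⟨v, hv⟩ := convexHull_nonempty_iff.1 ⟨a, haVA⟩
    obtain ⟨g, hg, f, hf, rfl⟩ := Set.mem_add.1 (hGV' hv)
    exact ⟨g, hg⟩
  have hS1ne : S1.Nonempty := by
    obtain ⟨p, hpP, hp1⟩ := hmax.2
    rw [hPtriple] at hpP
    obtain ⟨la, lb, lc, a, b, c, h0a, h0b, h0c, hsum, hxe, hA, hB, hC, hpair⟩ :=
      hull_triple_heights hVAh hVBh hVCh hpP
    rw [hp1] at hpair
    have hlc : lc ≠ 0 := by intro h; rw [h] at hpair hsum; linarith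
    have hcVC : c ∈ convexHull ℚ VC := hC.resolve_left hlc
    obtain ⟨v, hv⟩ := convexHull_nonempty_iff.1 ⟨c, hcVC⟩
    exact ⟨v, hVCS1 hv⟩
  have hXne : X.Nonempty := convexHull_nonempty_iff.2 hG1ne
  have hXc : Convex ℚ X := convex_convexHull ℚ _
  have hS0c : Convex ℚ S0 := convex_convexHull ℚ _
  have hS1c : Convex ℚ S1 := convex_convexHull ℚ _
  -- interior transfer
  have Hint1 : ∀ x : Fin n → ℚ, pairing w x = 0 → x ∈ interior P →
      x ∈ interior (mutation w P F G) := by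
    intro x hx0 hx
    rw [hPcore] at hx
    have := core_interior hwne hXc hS0c hS1c hFc hXh hS0h hS1h hF0 hXne hFne hx0 hx
    rwa [← hQcore] at this
  have Hint2 : ∀ x : Fin n → ℚ, pairing w x = 0 → x ∈ interior (mutation w P F G) →
      x ∈ interior P := by
    intro x hx0 hx
    have hswap1 : (S1 + F) ∪ S0 ∪ X = X ∪ S0 ∪ (S1 + F) := by
      ext y; simp only [Set.mem_union]; tauto
    have hswap2 : S1 ∪ S0 ∪ (X + F) = (X + F) ∪ S0 ∪ S1 := by
      ext y; simp only [Set.mem_union]; tauto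
    have hx' : x ∈ interior (convexHull ℚ ((S1 + F) ∪ S0 ∪ X)) := by
      rw [hswap1, ← hQcore]; exact hx
    have hS1h' : ∀ y ∈ S1, pairing (-w) y = -1 := fun y hy => by
      rw [pairing_neg_w, hS1h y hy]
    have hS0h' : ∀ y ∈ S0, pairing (-w) y = 0 := fun y hy => by
      rw [pairing_neg_w, hS0h y hy, neg_zero]
    have hXh' : ∀ y ∈ X, pairing (-w) y = 1 := fun y hy => by
      rw [pairing_neg_w, hXh y hy]; norm_num
    have hFh' : ∀ y ∈ F, pairing (-w) y = 0 := fun y hy => by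
      rw [pairing_neg_w, hF0 y hy, neg_zero]
    have hco := core_interior (neg_ne_zero.2 hwne) hS1c hS0c hXc hFc
      hS1h' hS0h' hXh' hFh' hS1ne hFne
      (by rw [pairing_neg_w, hx0, neg_zero]) hx'
    rwa [hswap2, ← hPcore] at hco
  -- slab bounds for Q
  have hQgen : ∀ y ∈ G1 ∪ S0 ∪ (S1 + F), -1 ≤ pairing w y ∧ pairing w y ≤ 1 := by
    rintro y ((hy | hy) | hy)
    · rw [hG1h y hy]; norm_num
    · rw [hS0h y hy]; norm_num
    · obtain ⟨a, ha, f, hf, rfl⟩ := Set.mem_add.1 hy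
      rw [pairing_add, hS1h a ha, hF0 f hf]; norm_num
  have hQub : ∀ p ∈ mutation w P F G, pairing w p ≤ 1 := by
    intro p hp
    rw [hQeq] at hp
    exact hull_pairing_le w (fun y hy => (hQgen y hy).2) hp
  have hQlb : ∀ p ∈ mutation w P F G, -1 ≤ pairing w p := by
    intro p hp
    rw [hQeq] at hp
    exact hull_pairing_ge w (fun y hy => (hQgen y hy).1) hp
  have hQconv : Convex ℚ (mutation w P F G) := by
    rw [hQeq]; exact convex_convexHull ℚ _
  have hQlat : IsLatticePolytope (mutation w P F G) := by
    have hG1poly : IsLatticePolytope G1 := by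
      rcases hG1dat.1 with h | h
      · exact absurd h hG1ne.ne_empty
      · exact h
    obtain ⟨SG, hSGlat, hSGeq⟩ := hG1poly
    set L0 := {x | x ∈ P ∧ IsLatticePt x ∧ pairing w x = (((0):ℤ):ℚ)} with hL0def
    set L1 := {x | x ∈ P ∧ IsLatticePt x ∧ pairing w x = (((1):ℤ):ℚ)} with hL1def
    have hL0fin : L0.Finite := by
      apply (lattice_finite SP).subset
      rintro x ⟨hxP, hxl, -⟩
      exact ⟨hxl, by rw [← hSPeq]; exact hxP⟩
    have hL1fin : L1.Finite := by
      apply (lattice_finite SP).subset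
      rintro x ⟨hxP, hxl, -⟩
      exact ⟨hxl, by rw [← hSPeq]; exact hxP⟩
    have hL1SF : (L1 + (SF : Set (Fin n → ℚ))).Finite := hL1fin.add SF.finite_toSet
    refine ⟨SG ∪ hL0fin.toFinset ∪ hL1SF.toFinset, ?_, ?_⟩
    · intro x hx
      rcases Finset.mem_union.1 hx with hx | hx
      · rcases Finset.mem_union.1 hx with hx | hx
        · exact hSGlat x hx
        · exact ((hL0fin.mem_toFinset).1 hx).2.1
      · obtain ⟨a, ha, b, hb, rfl⟩ := Set.mem_add.1 ((hL1SF.mem_toFinset).1 hx)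
        exact lattice_add ha.2.1 (hSFlat b hb)
    · rw [hQeq]
      have h0 : S0 = convexHull ℚ L0 := rfl
      have h1 : S1 + F = convexHull ℚ (L1 + (SF : Set (Fin n → ℚ))) := by
        rw [hSFeq, show S1 = convexHull ℚ L1 from rfl]
        exact (convexHull_add _ _).symm
      rw [h0, h1, hSGeq, hull_union3]
      congr 1
      simp only [Finset.coe_union, Set.Finite.coe_toFinset]
  -- interior lattice point of a height-bounded set has height 0
  have hzero : ∀ (x : Fin n → ℚ), IsLatticePt x → -1 < pairing w x → pairing w x < 1 →
      pairing w x = 0 := by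
    intro x hlx hb1 hb2
    obtain ⟨m, hm⟩ := pairing_int w hlx
    rw [hm] at hb1 hb2 ⊢
    have h1 : -1 < m := by exact_mod_cast hb1
    have h2 : m < 1 := by exact_mod_cast hb2
    have : m = 0 := by omega
    rw [this]; simp
  constructor
  · rintro ⟨⟨hQlat', h0Q, hQprim⟩, hQcan⟩
    have h0P : (0 : Fin n → ℚ) ∈ interior P := Hint2 0 (pairing_zero w) h0Q
    have hPcan : ∀ x ∈ interior P, IsLatticePt x → x = 0 := by
      intro x hx hlx
      obtain ⟨hb1, hb2⟩ := interior_pairing_bounds hwne hmax.1 hmin.1 hx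
      have hx0 := hzero x hlx hb1 hb2
      exact hQcan x (Hint1 x hx0 hx) hlx
    refine ⟨⟨⟨SP, hSPlat, hSPeq⟩, h0P, ?_⟩, hPcan⟩
    intro v hv
    exact prim_of_extreme hPc (wvec_ne hwne) h0P hPcan hv (hVlat v hv)
  · rintro ⟨⟨hPlat', h0P, hPprim⟩, hPcan⟩
    have h0Q : (0 : Fin n → ℚ) ∈ interior (mutation w P F G) :=
      Hint1 0 (pairing_zero w) h0P
    have hQcan : ∀ x ∈ interior (mutation w P F G), IsLatticePt x → x = 0 := by
      intro x hx hlx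
      obtain ⟨hb1, hb2⟩ := interior_pairing_bounds hwne hQub hQlb hx
      have hx0 := hzero x hlx hb1 hb2
      exact hPcan x (Hint2 x hx0 hx) hlx
    refine ⟨⟨hQlat, h0Q, ?_⟩, hQcan⟩
    intro v hv
    have hvl : IsLatticePt v := by
      obtain ⟨T, hTlat, hTeq⟩ := hQlat
      apply hTlat
      have h2 : v ∈ (convexHull ℚ (T : Set (Fin n → ℚ))).extremePoints ℚ := by
        rwa [← hTeq]
      exact_mod_cast extremePoints_convexHull_subset h2
    exact prim_of_extreme hQconv (wvec_ne hwne) h0Q hQcan hv hvl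
end
end
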